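/- For complex numbers ξ_1,...,ξ_N with all relevant denominators nonzero, ∑_{σ∈S_N} sgn(σ) · 1/[(1-ξ_{σ(2)})(1-ξ_{σ(3)})^2 ⋯ (1-ξ_{σ(N)})^{N-1}] · (ξ_{σ(2)} ξ_{σ(3)}^2 ⋯ ξ_{σ(N)}^{N-1}) / [(1-ξ_{σ(2)}⋯ξ_{σ(N)})(1-ξ_{σ(3)}⋯ξ_{σ(N)})⋯(1-ξ_{σ(N)})] = (1 - ξ_1 ξ_2 ⋯ ξ_N) · ∏_{i=1}^N 1/(1-ξ_i)^N · ∏_{1≤i<j≤N}(ξ_j-ξ_i), for N ≥ 2. -/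

import Mathlib

open Finset

noncomputable def Vd {n : ℕ} (v : Fin n → ℂ) : ℂ := ∏ i, ∏ j ∈ Finset.Ioi i, (v j - v i)

lemma Vd_eq_det {n : ℕ} (v : Fin n → ℂ) : Vd v = (Matrix.vandermonde v).det :=
  (Matrix.det_vandermonde v).symm

lemma Vd_comp {n : ℕ} (v : Fin n → ℂ) (σ : Equiv.Perm (Fin n)) :
    Vd (v ∘ σ) = ((Equiv.Perm.sign σ : ℤ) : ℂ) * Vd v := by
  rw [Vd_eq_det, Vd_eq_det]
  have h : Matrix.vandermonde (v ∘ σ) = (Matrix.vandermonde v).submatrix σ id := rfl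
  rw [h, Matrix.det_permute]

lemma Vd_succ {n : ℕ} (v : Fin (n + 1) → ℂ) :
    Vd v = (∏ m : Fin n, (v m.succ - v 0)) * Vd (v ∘ Fin.succ) := by
  unfold Vd
  rw [Fin.prod_univ_succ, Fin.prod_Ioi_zero]
  congr 1
  exact Finset.prod_congr rfl fun i _ => by rw [Fin.prod_Ioi_succ]; rfl

lemma prod_pairs {n : ℕ} (f : Fin n → Fin n → ℂ) :
    ∏ p ∈ Finset.univ.filter (fun p : Fin n × Fin n => p.1 < p.2), f p.1 p.2
      = ∏ i, ∏ j ∈ Finset.Ioi i, f i j := by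
  rw [Finset.prod_sigma']
  refine (Finset.prod_nbij' (fun x : Σ _ : Fin n, Fin n => ⟨x.1, x.2⟩)
    (fun p : Fin n × Fin n => ⟨p.1, p.2⟩) ?_ ?_ ?_ ?_ ?_).symm
  · intro x hx
    simp only [Finset.mem_sigma, Finset.mem_Ioi] at hx
    simp [hx.2]
  · intro p hp
    simp only [Finset.mem_filter] at hp
    simp [Finset.mem_Ioi, hp.2]
  · intros; rfl
  · intros; rfl
  · intros; rfl

open Polynomial in
lemma lagr (n : ℕ) (ξ : Fin (n + 1) → ℂ) (hinj : Function.Injective ξ) :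
    ∑ i, (1 - ξ i) ^ (n + 1) * ∏ a ∈ Finset.univ.erase i, (ξ a * (ξ a - ξ i)⁻¹)
      = 1 - ∏ a, ξ a := by
  set f : ℂ[X] := (X - C 1) ^ (n + 1) - ∏ a : Fin (n + 1), (X - C (ξ a)) with hf
  have hp : ((X - C 1 : ℂ[X]) ^ (n + 1)).Monic := (monic_X_sub_C 1).pow (n + 1)
  have hq : (∏ a : Fin (n + 1), (X - C (ξ a))).Monic :=
    monic_prod_of_monic _ _ fun a _ => monic_X_sub_C (ξ a)
  have hpdeg : ((X - C 1 : ℂ[X]) ^ (n + 1)).natDegree = n + 1 := by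
    rw [natDegree_pow, natDegree_X_sub_C, mul_one]
  have hqdeg : (∏ a : Fin (n + 1), (X - C (ξ a))).natDegree = n + 1 := by
    rw [natDegree_prod _ _ fun a _ => X_sub_C_ne_zero (ξ a)]
    simp
  have hdeg : f.degree < ((Finset.univ : Finset (Fin (n + 1))).card : WithBot ℕ) := by
    have h1 : f.degree < ((X - C 1 : ℂ[X]) ^ (n + 1)).degree := by
      apply degree_sub_lt
      · rw [degree_eq_natDegree hp.ne_zero, degree_eq_natDegree hq.ne_zero, hpdeg, hqdeg]
      · exact hp.ne_zero
      · rw [hp.leadingCoeff, hq.leadingCoeff]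
    rw [degree_eq_natDegree hp.ne_zero, hpdeg] at h1
    simpa using h1
  have hsum := Lagrange.eq_interpolate (s := Finset.univ) (v := ξ) (f := f) hinj.injOn hdeg
  have heval := congrArg (Polynomial.eval 0) hsum
  rw [Lagrange.interpolate_apply, Polynomial.eval_finset_sum] at heval
  have hfx : ∀ i : Fin (n + 1), f.eval (ξ i) = (ξ i - 1) ^ (n + 1) := by
    intro i
    have : (∏ a : Fin (n + 1), (X - C (ξ a))).eval (ξ i) = 0 := by
      rw [eval_prod]
      exact Finset.prod_eq_zero (Finset.mem_univ i) (by simp)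
    simp [hf, this]
  have hbasis : ∀ i : Fin (n + 1), (Lagrange.basis Finset.univ ξ i).eval 0
      = ∏ a ∈ Finset.univ.erase i, (ξ a * (ξ a - ξ i)⁻¹) := by
    intro i
    rw [Lagrange.basis, eval_prod]
    refine Finset.prod_congr rfl fun j _ => ?_
    rw [Lagrange.basisDivisor]
    simp only [eval_mul, eval_C, eval_sub, eval_X]
    rw [zero_sub, show (ξ i - ξ j)⁻¹ = -(ξ j - ξ i)⁻¹ by rw [← inv_neg, neg_sub]]
    ring
  have hprodneg : ∏ x : Fin (n + 1), -ξ x = (-1 : ℂ) ^ (n + 1) * ∏ x, ξ x := by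
    have h : ∏ x : Fin (n + 1), -ξ x = ∏ x : Fin (n + 1), ((-1 : ℂ) * ξ x) :=
      Finset.prod_congr rfl fun x _ => by ring
    rw [h, Finset.prod_mul_distrib, Finset.prod_const, Finset.card_univ, Fintype.card_fin]
  have hf0 : f.eval 0 = (-1 : ℂ) ^ (n + 1) * (1 - ∏ a, ξ a) := by
    simp only [hf, eval_sub, eval_pow, eval_prod, eval_X, eval_C, zero_sub]
    rw [hprodneg]
    ring
  rw [hf0] at heval
  simp only [eval_mul, eval_C, hfx, hbasis] at heval
  have hcancel : ∀ i : Fin (n + 1), (ξ i - 1) ^ (n + 1)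
      = (-1 : ℂ) ^ (n + 1) * (1 - ξ i) ^ (n + 1) := by
    intro i
    rw [← neg_pow, neg_sub]
  simp only [hcancel] at heval
  have hne : ((-1 : ℂ) ^ (n + 1)) ≠ 0 := pow_ne_zero _ (by norm_num)
  apply mul_left_cancel₀ hne
  rw [heval, Finset.mul_sum]
  exact Finset.sum_congr rfl fun i _ => by ring

lemma Vd_swap {n : ℕ} (v : Fin n → ℂ) (i : Fin n) [NeZero n] :
    Vd (v ∘ Equiv.swap 0 i) = (if i = 0 then (1 : ℂ) else -1) * Vd v := by
  rw [Vd_comp]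
  by_cases h : i = 0
  · subst h; simp
  · rw [Equiv.Perm.sign_swap (Ne.symm h)]
    simp [h]

lemma outer (n : ℕ) (ξ : Fin (n + 2) → ℂ) (hinj : Function.Injective ξ) :
    ∑ i : Fin (n + 2), (if i = (0 : Fin (n + 2)) then (1 : ℂ) else -1) * (1 - ξ i) ^ (n + 2) *
      ((∏ m : Fin (n + 1), ξ (Equiv.swap 0 i m.succ)) *
        Vd (fun m : Fin (n + 1) => ξ (Equiv.swap 0 i m.succ)))
    = (1 - ∏ a, ξ a) * Vd ξ := by
  have hterm : ∀ i : Fin (n + 2),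
      (if i = (0 : Fin (n + 2)) then (1 : ℂ) else -1) * (1 - ξ i) ^ (n + 2) *
      ((∏ m : Fin (n + 1), ξ (Equiv.swap 0 i m.succ)) *
        Vd (fun m : Fin (n + 1) => ξ (Equiv.swap 0 i m.succ)))
      = (1 - ξ i) ^ (n + 2) * (∏ a ∈ Finset.univ.erase i, (ξ a * (ξ a - ξ i)⁻¹)) * Vd ξ := by
    intro i
    set w := Equiv.swap (0 : Fin (n + 2)) i with hw
    set s : ℂ := if i = (0 : Fin (n + 2)) then (1 : ℂ) else -1 with hs
    set η : Fin (n + 1) → ℂ := fun m => ξ (w m.succ) with hη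
    have hw0 : w 0 = i := Equiv.swap_apply_left 0 i
    have hwi : w i = 0 := Equiv.swap_apply_right 0 i
    have hVw : Vd (ξ ∘ w) = s * Vd ξ := Vd_swap ξ i
    have hVs : Vd (ξ ∘ w) = (∏ m : Fin (n + 1), (η m - ξ i)) * Vd η := by
      rw [Vd_succ (ξ ∘ w)]
      have h2 : ∀ m : Fin (n + 1), (ξ ∘ w) m.succ - (ξ ∘ w) 0 = η m - ξ i := fun m => by
        simp only [Function.comp_apply, hw0]
        rfl
      rw [Finset.prod_congr rfl fun m _ => h2 m]
      rfl
    have hPne : (∏ m : Fin (n + 1), (η m - ξ i)) ≠ 0 := by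
      rw [Finset.prod_ne_zero_iff]
      intro m _
      rw [sub_ne_zero]
      intro h
      have := hinj h
      rw [← hw0] at this
      exact Fin.succ_ne_zero m (w.injective this)
    have hss : s * s = 1 := by rw [hs]; split <;> norm_num
    have hVη : Vd η = s * Vd ξ * (∏ m : Fin (n + 1), (η m - ξ i))⁻¹ := by
      rw [← hVw, hVs]
      rw [mul_comm ((∏ m : Fin (n + 1), (η m - ξ i))) (Vd η), mul_assoc,
        mul_inv_cancel₀ hPne, mul_one]
    rw [hVη]
    have hprodswap : ∏ m : Fin (n + 1), (η m * (η m - ξ i)⁻¹)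
        = ∏ a ∈ Finset.univ.erase i, (ξ a * (ξ a - ξ i)⁻¹) := by
      refine Finset.prod_bij (fun m _ => w m.succ) ?_ ?_ ?_ ?_
      · intro m _
        refine Finset.mem_erase.2 ⟨?_, Finset.mem_univ _⟩
        intro h
        rw [← hw0] at h
        exact Fin.succ_ne_zero m (w.injective h)
      · intro a _ b _ h
        exact Fin.succ_injective _ (w.injective h)
      · intro b hb
        have hb' : b ≠ i := (Finset.mem_erase.1 hb).1
        have hwb : w b ≠ 0 := fun h => hb' (w.injective (h.trans hwi.symm))
        obtain ⟨m, hm⟩ := Fin.exists_succ_eq.2 hwb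
        refine ⟨m, Finset.mem_univ m, ?_⟩
        show w m.succ = b
        rw [hm, hw, Equiv.swap_apply_self]
      · intro m _
        rfl
    calc s * (1 - ξ i) ^ (n + 2) * ((∏ m : Fin (n + 1), η m) *
          (s * Vd ξ * (∏ m : Fin (n + 1), (η m - ξ i))⁻¹))
        = (s * s) * ((1 - ξ i) ^ (n + 2) * ((∏ m : Fin (n + 1), η m) *
            (∏ m : Fin (n + 1), (η m - ξ i))⁻¹ * Vd ξ)) := by ring
      _ = (1 - ξ i) ^ (n + 2) * (∏ m : Fin (n + 1), (η m * (η m - ξ i)⁻¹)) * Vd ξ := by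
          rw [hss, one_mul, ← Finset.prod_inv_distrib, ← Finset.prod_mul_distrib]
          ring
      _ = (1 - ξ i) ^ (n + 2) * (∏ a ∈ Finset.univ.erase i, (ξ a * (ξ a - ξ i)⁻¹)) * Vd ξ := by
          rw [hprodswap]
  rw [Finset.sum_congr rfl fun i _ => hterm i, ← Finset.sum_mul]
  congr 1
  exact lagr (n + 1) ξ hinj

lemma key : ∀ (n : ℕ) (ξ : Fin (n + 1) → ℂ), Function.Injective ξ →
    (∀ (σ : Equiv.Perm (Fin (n + 1))) (k : Fin (n + 1)), k.val ≠ 0 →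
      (∏ m : Fin (n + 1), if k ≤ m then ξ (σ m) else 1) ≠ 1) →
    (∑ σ : Equiv.Perm (Fin (n + 1)), ((Equiv.Perm.sign σ : ℤ) : ℂ) *
      ((∏ j : Fin (n + 1), ξ (σ j) ^ j.val * (1 - ξ (σ j)) ^ (n + 1 - j.val)) /
        ∏ k : Fin (n + 1), (if k.val = 0 then 1 else
          1 - ∏ m : Fin (n + 1), (if k ≤ m then ξ (σ m) else 1))))
    = (1 - ∏ i, ξ i) * Vd ξ := by
  intro n
  induction n with
  | zero =>
    intro ξ _ _
    rw [Fintype.sum_subsingleton _ (1 : Equiv.Perm (Fin 1))]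
    simp [Vd]
  | succ n ih =>
    intro ξ hinj hprod
    have hDcalc : ∀ (i : Fin (n + 2)) (τ : Equiv.Perm (Fin (n + 1))) (k : Fin (n + 1)),
        (∏ m : Fin (n + 2), if k.succ ≤ m then ξ ((Equiv.Perm.decomposeFin.symm (i, τ)) m) else 1)
        = ∏ m : Fin (n + 1), (if k ≤ m then ξ (Equiv.swap 0 i ((τ m).succ)) else 1) := by
      intro i τ k
      rw [Fin.prod_univ_succ]
      rw [if_neg (by
        intro h
        exact Fin.succ_ne_zero k (Fin.le_zero_iff.1 h))]
      rw [one_mul]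
      refine Finset.prod_congr rfl fun m _ => ?_
      rw [Equiv.Perm.decomposeFin_symm_apply_succ]
      by_cases h : k ≤ m
      · rw [if_pos (Fin.succ_le_succ_iff.2 h), if_pos h]
      · rw [if_neg (fun hc => h (Fin.succ_le_succ_iff.1 hc)), if_neg h]
    have hη1g : ∀ i : Fin (n + 2),
        (∏ m : Fin (n + 1), ξ (Equiv.swap 0 i m.succ)) ≠ 1 := by
      intro i
      have h := hprod (Equiv.Perm.decomposeFin.symm (i, 1)) ((0 : Fin (n + 1)).succ)
        (by simp [Fin.val_succ])
      rw [hDcalc i 1 0] at h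
      simpa [Fin.zero_le] using h
    have hinner : ∀ i : Fin (n + 2),
        (∑ τ : Equiv.Perm (Fin (n + 1)),
          ((Equiv.Perm.sign (Equiv.Perm.decomposeFin.symm (i, τ)) : ℤ) : ℂ) *
          ((∏ j : Fin (n + 2), ξ ((Equiv.Perm.decomposeFin.symm (i, τ)) j) ^ j.val *
              (1 - ξ ((Equiv.Perm.decomposeFin.symm (i, τ)) j)) ^ (n + 2 - j.val)) /
            ∏ k : Fin (n + 2), (if k.val = 0 then 1 else
              1 - ∏ m : Fin (n + 2), (if k ≤ m then ξ ((Equiv.Perm.decomposeFin.symm (i, τ)) m) else 1))))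
        = (if i = (0 : Fin (n + 2)) then (1 : ℂ) else -1) * (1 - ξ i) ^ (n + 2) *
          ((∏ m : Fin (n + 1), ξ (Equiv.swap 0 i m.succ)) *
            Vd (fun m : Fin (n + 1) => ξ (Equiv.swap 0 i m.succ))) := by
      intro i
      set η : Fin (n + 1) → ℂ := fun m => ξ (Equiv.swap 0 i m.succ) with hηdef
      have hηinj : Function.Injective η := fun a b h =>
        Fin.succ_injective _ ((Equiv.swap 0 i).injective (hinj h))
      have hηprod : ∀ (τ : Equiv.Perm (Fin (n + 1))) (k : Fin (n + 1)), k.val ≠ 0 →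
          (∏ m : Fin (n + 1), if k ≤ m then η (τ m) else 1) ≠ 1 := by
        intro τ k _
        have h := hprod (Equiv.Perm.decomposeFin.symm (i, τ)) k.succ (by simp [Fin.val_succ])
        rw [hDcalc i τ k] at h
        exact h
      have hη1 : (∏ m : Fin (n + 1), η m) ≠ 1 := hη1g i
      have hη0 : (1 : ℂ) - ∏ m : Fin (n + 1), η m ≠ 0 := sub_ne_zero.mpr (Ne.symm hη1)
      have hbody : ∀ τ : Equiv.Perm (Fin (n + 1)),
          ((Equiv.Perm.sign (Equiv.Perm.decomposeFin.symm (i, τ)) : ℤ) : ℂ) *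
          ((∏ j : Fin (n + 2), ξ ((Equiv.Perm.decomposeFin.symm (i, τ)) j) ^ j.val *
              (1 - ξ ((Equiv.Perm.decomposeFin.symm (i, τ)) j)) ^ (n + 2 - j.val)) /
            ∏ k : Fin (n + 2), (if k.val = 0 then 1 else
              1 - ∏ m : Fin (n + 2), (if k ≤ m then ξ ((Equiv.Perm.decomposeFin.symm (i, τ)) m) else 1)))
          = ((if i = (0 : Fin (n + 2)) then (1 : ℂ) else -1) *
              ((1 - ξ i) ^ (n + 2) * ((∏ m : Fin (n + 1), η m) * ((1 : ℂ) - ∏ m : Fin (n + 1), η m)⁻¹))) *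
            (((Equiv.Perm.sign τ : ℤ) : ℂ) *
              ((∏ j : Fin (n + 1), η (τ j) ^ j.val * (1 - η (τ j)) ^ (n + 1 - j.val)) /
                ∏ k : Fin (n + 1), (if k.val = 0 then 1 else
                  1 - ∏ m : Fin (n + 1), (if k ≤ m then η (τ m) else 1)))) := by
        intro τ
        have hsign : ((Equiv.Perm.sign (Equiv.Perm.decomposeFin.symm (i, τ)) : ℤ) : ℂ)
            = (if i = (0 : Fin (n + 2)) then (1 : ℂ) else -1) * ((Equiv.Perm.sign τ : ℤ) : ℂ) := by
          rw [Equiv.Perm.decomposeFin.symm_sign]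
          split <;> simp
        have hnum : (∏ j : Fin (n + 2), ξ ((Equiv.Perm.decomposeFin.symm (i, τ)) j) ^ j.val *
              (1 - ξ ((Equiv.Perm.decomposeFin.symm (i, τ)) j)) ^ (n + 2 - j.val))
            = (1 - ξ i) ^ (n + 2) * ((∏ m : Fin (n + 1), η m) *
                ∏ j : Fin (n + 1), η (τ j) ^ j.val * (1 - η (τ j)) ^ (n + 1 - j.val)) := by
          rw [Fin.prod_univ_succ, Equiv.Perm.decomposeFin_symm_apply_zero]
          have hterm : ∀ j : Fin (n + 1),
              ξ ((Equiv.Perm.decomposeFin.symm (i, τ)) j.succ) ^ (j.succ : Fin (n + 2)).val *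
                (1 - ξ ((Equiv.Perm.decomposeFin.symm (i, τ)) j.succ)) ^ (n + 2 - (j.succ : Fin (n + 2)).val)
              = η (τ j) * (η (τ j) ^ j.val * (1 - η (τ j)) ^ (n + 1 - j.val)) := by
            intro j
            rw [Equiv.Perm.decomposeFin_symm_apply_succ]
            have h1 : (j.succ : Fin (n + 2)).val = j.val + 1 := rfl
            rw [h1, show n + 2 - (j.val + 1) = n + 1 - j.val from by omega, pow_succ]
            show η (τ j) ^ j.val * η (τ j) * (1 - η (τ j)) ^ (n + 1 - j.val) = _
            ring
          rw [Finset.prod_congr rfl fun j _ => hterm j, Finset.prod_mul_distrib,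
            Equiv.prod_comp τ η]
          simp only [Fin.val_zero, pow_zero, one_mul, Nat.sub_zero]
        have hden : (∏ k : Fin (n + 2), (if k.val = 0 then (1 : ℂ) else
              1 - ∏ m : Fin (n + 2), (if k ≤ m then ξ ((Equiv.Perm.decomposeFin.symm (i, τ)) m) else 1)))
            = ((1 : ℂ) - ∏ m : Fin (n + 1), η m) *
              ∏ k : Fin (n + 1), (if k.val = 0 then 1 else
                1 - ∏ m : Fin (n + 1), (if k ≤ m then η (τ m) else 1)) := by
          rw [Fin.prod_univ_succ, if_pos (show ((0 : Fin (n + 2)).val = 0) from rfl), one_mul]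
          have h1 : ∀ k : Fin (n + 1),
              (if (k.succ : Fin (n + 2)).val = 0 then (1 : ℂ) else
                1 - ∏ m : Fin (n + 2), (if k.succ ≤ m then ξ ((Equiv.Perm.decomposeFin.symm (i, τ)) m) else 1))
              = 1 - ∏ m : Fin (n + 1), (if k ≤ m then η (τ m) else 1) := by
            intro k
            rw [if_neg (by simp [Fin.val_succ]), hDcalc i τ k]
          rw [Finset.prod_congr rfl fun k _ => h1 k]
          have hr : (∏ k : Fin (n + 1), (if k.val = 0 then (1 : ℂ) else
                1 - ∏ m : Fin (n + 1), (if k ≤ m then η (τ m) else 1)))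
              = ∏ k : Fin n, ((1 : ℂ) - ∏ m : Fin (n + 1), (if k.succ ≤ m then η (τ m) else 1)) := by
            rw [Fin.prod_univ_succ, if_pos (show ((0 : Fin (n + 1)).val = 0) from rfl), one_mul]
            exact Finset.prod_congr rfl fun k _ => if_neg (by simp [Fin.val_succ])
          rw [hr, Fin.prod_univ_succ]
          congr 1
          rw [Finset.prod_congr rfl fun m _ => if_pos (Fin.zero_le m), Equiv.prod_comp τ η]
        rw [hsign, hnum, hden, div_eq_mul_inv, div_eq_mul_inv, mul_inv]
        ring
      rw [Finset.sum_congr rfl fun τ _ => hbody τ, ← Finset.mul_sum, ih η hηinj hηprod]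
      field_simp
    calc (∑ σ : Equiv.Perm (Fin (n + 2)), ((Equiv.Perm.sign σ : ℤ) : ℂ) *
          ((∏ j : Fin (n + 2), ξ (σ j) ^ j.val * (1 - ξ (σ j)) ^ (n + 2 - j.val)) /
            ∏ k : Fin (n + 2), (if k.val = 0 then 1 else
              1 - ∏ m : Fin (n + 2), (if k ≤ m then ξ (σ m) else 1))))
        = ∑ p : Fin (n + 2) × Equiv.Perm (Fin (n + 1)),
            ((Equiv.Perm.sign (Equiv.Perm.decomposeFin.symm p) : ℤ) : ℂ) *
            ((∏ j : Fin (n + 2), ξ ((Equiv.Perm.decomposeFin.symm p) j) ^ j.val *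
                (1 - ξ ((Equiv.Perm.decomposeFin.symm p) j)) ^ (n + 2 - j.val)) /
              ∏ k : Fin (n + 2), (if k.val = 0 then 1 else
                1 - ∏ m : Fin (n + 2), (if k ≤ m then ξ ((Equiv.Perm.decomposeFin.symm p) m) else 1))) := by
          refine Fintype.sum_equiv Equiv.Perm.decomposeFin _ _ fun σ => ?_
          simp only [Equiv.symm_apply_apply]
      _ = ∑ i : Fin (n + 2), ∑ τ : Equiv.Perm (Fin (n + 1)),
            ((Equiv.Perm.sign (Equiv.Perm.decomposeFin.symm (i, τ)) : ℤ) : ℂ) *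
            ((∏ j : Fin (n + 2), ξ ((Equiv.Perm.decomposeFin.symm (i, τ)) j) ^ j.val *
                (1 - ξ ((Equiv.Perm.decomposeFin.symm (i, τ)) j)) ^ (n + 2 - j.val)) /
              ∏ k : Fin (n + 2), (if k.val = 0 then 1 else
                1 - ∏ m : Fin (n + 2), (if k ≤ m then ξ ((Equiv.Perm.decomposeFin.symm (i, τ)) m) else 1))) :=
          Fintype.sum_prod_type _
      _ = ∑ i : Fin (n + 2), (if i = (0 : Fin (n + 2)) then (1 : ℂ) else -1) * (1 - ξ i) ^ (n + 2) *
            ((∏ m : Fin (n + 1), ξ (Equiv.swap 0 i m.succ)) *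
              Vd (fun m : Fin (n + 1) => ξ (Equiv.swap 0 i m.succ))) :=
          Finset.sum_congr rfl fun i _ => hinner i
      _ = (1 - ∏ i, ξ i) * Vd ξ := outer n ξ hinj

theorem stmt3 (N : ℕ) (hN : 2 ≤ N) (ξ : Fin N → ℂ)
    (hne : ∀ i, ξ i ≠ 1)
    (hprod : ∀ (σ : Equiv.Perm (Fin N)) (k : Fin N), k.val ≠ 0 →
      (∏ m : Fin N, if k ≤ m then ξ (σ m) else 1) ≠ 1) :
    ∑ σ : Equiv.Perm (Fin N),
      ((Equiv.Perm.sign σ : ℤ) : ℂ) *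
        ((∏ j : Fin N, ξ (σ j) ^ j.val) /
          ((∏ j : Fin N, (1 - ξ (σ j)) ^ j.val) *
            ∏ k : Fin N, (if k.val = 0 then 1 else 1 - ∏ m : Fin N, (if k ≤ m then ξ (σ m) else 1)))) =
      (1 - ∏ i : Fin N, ξ i) * (∏ i : Fin N, (1 / (1 - ξ i) ^ N)) *
        ∏ p ∈ Finset.univ.filter (fun p : Fin N × Fin N => p.1 < p.2), (ξ p.2 - ξ p.1) := by
  by_cases hinj : Function.Injective ξ
  · obtain ⟨n, rfl⟩ : ∃ n, N = n + 1 := ⟨N - 1, by omega⟩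
    have hkey := key n ξ hinj hprod
    have hV : (∏ p ∈ Finset.univ.filter (fun p : Fin (n + 1) × Fin (n + 1) => p.1 < p.2),
        (ξ p.2 - ξ p.1)) = Vd ξ := prod_pairs (fun a b => ξ b - ξ a)
    have hF : ∀ i, (1 : ℂ) - ξ i ≠ 0 := fun i => sub_ne_zero.mpr (Ne.symm (hne i))
    have hterm : ∀ σ : Equiv.Perm (Fin (n + 1)),
        ((Equiv.Perm.sign σ : ℤ) : ℂ) *
          ((∏ j : Fin (n + 1), ξ (σ j) ^ j.val) /
            ((∏ j : Fin (n + 1), (1 - ξ (σ j)) ^ j.val) *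
              ∏ k : Fin (n + 1), (if k.val = 0 then 1 else
                1 - ∏ m : Fin (n + 1), (if k ≤ m then ξ (σ m) else 1))))
        = (∏ i : Fin (n + 1), (1 - ξ i) ^ (n + 1))⁻¹ *
            (((Equiv.Perm.sign σ : ℤ) : ℂ) *
              ((∏ j : Fin (n + 1), ξ (σ j) ^ j.val * (1 - ξ (σ j)) ^ (n + 1 - j.val)) /
                ∏ k : Fin (n + 1), (if k.val = 0 then 1 else
                  1 - ∏ m : Fin (n + 1), (if k ≤ m then ξ (σ m) else 1)))) := by
      intro σ
      set A := ∏ j : Fin (n + 1), ξ (σ j) ^ j.val with hA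
      set B := ∏ j : Fin (n + 1), (1 - ξ (σ j)) ^ j.val with hB
      set E := ∏ j : Fin (n + 1), (1 - ξ (σ j)) ^ (n + 1 - j.val) with hE
      set C := ∏ k : Fin (n + 1), (if k.val = 0 then (1 : ℂ) else
        1 - ∏ m : Fin (n + 1), (if k ≤ m then ξ (σ m) else 1)) with hC
      have hEne : E ≠ 0 := Finset.prod_ne_zero_iff.2 fun j _ => pow_ne_zero _ (hF (σ j))
      have hBE : B * E = ∏ i : Fin (n + 1), (1 - ξ i) ^ (n + 1) := by
        rw [hB, hE, ← Finset.prod_mul_distrib,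
          ← Equiv.prod_comp σ (fun i => (1 - ξ i) ^ (n + 1))]
        refine Finset.prod_congr rfl fun j _ => ?_
        rw [← pow_add]
        congr 1
        have hj := j.isLt
        omega
      have hAE : (∏ j : Fin (n + 1), ξ (σ j) ^ j.val * (1 - ξ (σ j)) ^ (n + 1 - j.val))
          = A * E := Finset.prod_mul_distrib
      rw [hAE, ← hBE]
      have h1 : ((B * E)⁻¹ * (((Equiv.Perm.sign σ : ℤ) : ℂ) * (A * E / C)))
          = ((Equiv.Perm.sign σ : ℤ) : ℂ) * (A * E / (B * C * E)) := by
        rw [div_eq_mul_inv, div_eq_mul_inv, mul_inv, mul_inv, mul_inv]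
        ring
      rw [h1, mul_div_mul_right _ _ hEne]
    rw [Finset.sum_congr rfl fun σ _ => hterm σ, ← Finset.mul_sum, hkey, hV]
    have hFinv : (∏ i : Fin (n + 1), (1 / (1 - ξ i) ^ (n + 1)))
        = (∏ i : Fin (n + 1), (1 - ξ i) ^ (n + 1))⁻¹ := by
      rw [← Finset.prod_inv_distrib]
      exact Finset.prod_congr rfl fun i _ => one_div _
    rw [hFinv]
    ring
  · rw [Function.not_injective_iff] at hinj
    obtain ⟨a, b, hab, hne'⟩ := hinj
    have hRHS : (∏ p ∈ Finset.univ.filter (fun p : Fin N × Fin N => p.1 < p.2),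
        (ξ p.2 - ξ p.1)) = 0 := by
      rcases lt_or_gt_of_ne hne' with h | h
      · exact Finset.prod_eq_zero (Finset.mem_filter.2 ⟨Finset.mem_univ (a, b), h⟩)
          (sub_eq_zero_of_eq hab.symm)
      · exact Finset.prod_eq_zero (Finset.mem_filter.2 ⟨Finset.mem_univ (b, a), h⟩)
          (sub_eq_zero_of_eq hab)
    rw [hRHS, mul_zero]
    set w := Equiv.swap a b with hw
    have hξw : ∀ x, ξ (w x) = ξ x := by
      intro x
      rw [hw, Equiv.swap_apply_def]
      split_ifs with h1 h2
      · rw [h1, hab]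
      · rw [h2, hab]
      · rfl
    set f : Equiv.Perm (Fin N) → ℂ := fun σ =>
      ((Equiv.Perm.sign σ : ℤ) : ℂ) *
        ((∏ j : Fin N, ξ (σ j) ^ j.val) /
          ((∏ j : Fin N, (1 - ξ (σ j)) ^ j.val) *
            ∏ k : Fin N, (if k.val = 0 then 1 else
              1 - ∏ m : Fin N, (if k ≤ m then ξ (σ m) else 1)))) with hf
    show ∑ σ : Equiv.Perm (Fin N), f σ = 0
    have hflip : ∀ σ, f (w * σ) = - f σ := by
      intro σ
      rw [hf]
      simp only [Equiv.Perm.mul_apply, hξw]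
      rw [map_mul, Equiv.Perm.sign_swap hne']
      push_cast
      ring
    have hS : ∑ σ : Equiv.Perm (Fin N), f σ = ∑ σ : Equiv.Perm (Fin N), f (w * σ) :=
      (Fintype.sum_equiv (Equiv.mulLeft w) _ _ (fun σ => rfl)).symm
    have h2 : ∑ σ : Equiv.Perm (Fin N), f σ = - ∑ σ : Equiv.Perm (Fin N), f σ := by
      conv_lhs => rw [hS, Finset.sum_congr rfl fun σ _ => hflip σ]
      rw [Finset.sum_neg_distrib]
    have h3 : (2 : ℂ) * ∑ σ : Equiv.Perm (Fin N), f σ = 0 := by linear_combination h2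
    exact (mul_eq_zero.1 h3).resolve_left two_ne_zero
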